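/- Let G be a finite group and let φ_H : A(G) → ℤ denote the mark homomorphism counting H-fixed points of a finite G-set, extended to the Burnside ring. Then the product map A(G) → ∏_{(H)} ℤ over conjugacy classes of subgroups (H) of G is an injective ring homomorphism. -/

import Mathlib

/-- Sum action of `G` on `α ⊕ β`. -/
instance sumMulAction {G α β : Type*} [Group G] [MulAction G α] [MulAction G β] :
    MulAction G (α ⊕ β) where
  smul g x := x.map (g • ·) (g • ·)
  one_smul x := by cases x <;> simp [HSMul.hSMul, SMul.smul] <;> exact one_smul _ _
  mul_smul g h x := by cases x <;> simp [HSMul.hSMul, SMul.smul] <;> exact mul_smul _ _ _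

/-- The mark of a finite `G`-set `α` at a subgroup `H`: the number of `H`-fixed points. -/
noncomputable def mark {G : Type*} [Group G] (H : Subgroup G) (α : Type*) [MulAction G α] : ℕ :=
  Nat.card {x : α // ∀ h ∈ H, h • x = x}

section Aux

variable {G : Type*} [Group G]

lemma equiv_symm_smul {α β : Type*} [MulAction G α] [MulAction G β] (e : α ≃ β)
    (he : ∀ (g : G) (x : α), e (g • x) = g • e x) (g : G) (y : β) :
    e.symm (g • y) = g • e.symm y := by
  apply e.injective
  rw [he, e.apply_symm_apply, e.apply_symm_apply]

lemma mark_congr {α β : Type*} [MulAction G α] [MulAction G β] (e : α ≃ β)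
    (he : ∀ (g : G) (x : α), e (g • x) = g • e x) (H : Subgroup G) :
    mark H α = mark H β := by
  apply Nat.card_congr
  refine ⟨fun x => ⟨e x.1, fun h hh => ?_⟩, fun y => ⟨e.symm y.1, fun h hh => ?_⟩,
    fun x => Subtype.ext (e.symm_apply_apply _), fun y => Subtype.ext (e.apply_symm_apply _)⟩
  · rw [← he, x.2 h hh]
  · rw [← equiv_symm_smul e he, y.2 h hh]

lemma mark_sum {α β : Type*} [Finite α] [Finite β] [MulAction G α] [MulAction G β]
    (H : Subgroup G) : mark H (α ⊕ β) = mark H α + mark H β := by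
  unfold mark
  rw [← Nat.card_sum]
  exact Nat.card_congr
    { toFun := fun x => match x with
        | ⟨Sum.inl a, h⟩ => Sum.inl ⟨a, fun g hg => Sum.inl.inj (h g hg)⟩
        | ⟨Sum.inr b, h⟩ => Sum.inr ⟨b, fun g hg => Sum.inr.inj (h g hg)⟩
      invFun := fun y => match y with
        | Sum.inl ⟨a, h⟩ => ⟨Sum.inl a, fun g hg => congrArg Sum.inl (h g hg)⟩
        | Sum.inr ⟨b, h⟩ => ⟨Sum.inr b, fun g hg => congrArg Sum.inr (h g hg)⟩
      left_inv := fun x => match x with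
        | ⟨Sum.inl a, h⟩ => rfl
        | ⟨Sum.inr b, h⟩ => rfl
      right_inv := fun y => match y with
        | Sum.inl ⟨a, h⟩ => rfl
        | Sum.inr ⟨b, h⟩ => rfl }

lemma mark_prod {α β : Type*} [Finite α] [Finite β] [MulAction G α] [MulAction G β]
    (H : Subgroup G) : mark H (α × β) = mark H α * mark H β := by
  unfold mark
  rw [← Nat.card_prod]
  exact Nat.card_congr
    ⟨fun x => (⟨x.1.1, fun g hg => congrArg Prod.fst (x.2 g hg)⟩,
        ⟨x.1.2, fun g hg => congrArg Prod.snd (x.2 g hg)⟩),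
     fun y => ⟨(y.1.1, y.2.1), fun g hg => Prod.ext (y.1.2 g hg) (y.2.2 g hg)⟩,
     fun x => rfl, fun y => rfl⟩

lemma mark_bot {α : Type*} [MulAction G α] : mark (⊥ : Subgroup G) α = Nat.card α := by
  unfold mark
  apply Nat.card_congr
  refine ⟨fun x => x.1, fun a => ⟨a, fun h hh => ?_⟩, fun x => Subtype.ext rfl, fun a => rfl⟩
  rcases Subgroup.mem_bot.mp hh with rfl
  exact one_smul _ _

lemma mark_ne_zero_iff {α : Type*} [Finite α] [MulAction G α] (H : Subgroup G) :
    mark H α ≠ 0 ↔ ∃ x : α, ∀ h ∈ H, h • x = x := by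
  unfold mark
  rw [Nat.card_ne_zero]
  exact ⟨fun h => nonempty_subtype.mp h.1, fun h => ⟨nonempty_subtype.mpr h, inferInstance⟩⟩

/-- `MulAction` on a subtype cut out by an invariant predicate. -/
def invSubAction {α : Type*} [MulAction G α] (p : α → Prop)
    (hp : ∀ (g : G) (a : α), p a → p (g • a)) : MulAction G {a : α // p a} where
  smul g a := ⟨g • a.1, hp g a.1 a.2⟩
  one_smul a := Subtype.ext (one_smul _ _)
  mul_smul g h a := Subtype.ext (mul_smul _ _ _)

lemma orbit_key {α β : Type*} [MulAction G α] [MulAction G β] (x : α) (y : β)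
    (hstab : MulAction.stabilizer G x = MulAction.stabilizer G y)
    (a : α) (ha : a ∈ MulAction.orbit G x) (g : G) (hg : g • x = a) :
    (MulAction.mem_orbit_iff.mp ha).choose • y = g • y := by
  set c := (MulAction.mem_orbit_iff.mp ha).choose with hc
  have h1 : c • x = a := (MulAction.mem_orbit_iff.mp ha).choose_spec
  have h2 : (g⁻¹ * c) ∈ MulAction.stabilizer G x := by
    rw [MulAction.mem_stabilizer_iff, mul_smul, h1, ← hg, inv_smul_smul]
  rw [hstab, MulAction.mem_stabilizer_iff, mul_smul] at h2
  have := congrArg (g • ·) h2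
  simpa [smul_smul] using this

lemma orbit_equiv {α β : Type*} [MulAction G α] [MulAction G β] (x : α) (y : β)
    (hstab : MulAction.stabilizer G x = MulAction.stabilizer G y) :
    ∃ e : {a : α // a ∈ MulAction.orbit G x} ≃ {b : β // b ∈ MulAction.orbit G y},
      ∀ (g : G) (a b), b.1 = g • a.1 → (e b).1 = g • (e a).1 := by
  classical
  refine ⟨⟨fun a => ⟨(MulAction.mem_orbit_iff.mp a.2).choose • y, MulAction.mem_orbit y _⟩,
          fun b => ⟨(MulAction.mem_orbit_iff.mp b.2).choose • x, MulAction.mem_orbit x _⟩,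
          ?_, ?_⟩, ?_⟩
  · rintro ⟨a, ha⟩
    apply Subtype.ext
    have h1 : (MulAction.mem_orbit_iff.mp ha).choose • x = a :=
      (MulAction.mem_orbit_iff.mp ha).choose_spec
    simpa [h1] using orbit_key y x hstab.symm _ (MulAction.mem_orbit y _)
      (MulAction.mem_orbit_iff.mp ha).choose rfl
  · rintro ⟨b, hb⟩
    apply Subtype.ext
    have h1 : (MulAction.mem_orbit_iff.mp hb).choose • y = b :=
      (MulAction.mem_orbit_iff.mp hb).choose_spec
    simpa [h1] using orbit_key x y hstab _ (MulAction.mem_orbit x _)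
      (MulAction.mem_orbit_iff.mp hb).choose rfl
  · rintro g ⟨a, ha⟩ ⟨b, hb⟩ hab
    simp only [Equiv.coe_fn_mk]
    have h1 : (MulAction.mem_orbit_iff.mp ha).choose • x = a :=
      (MulAction.mem_orbit_iff.mp ha).choose_spec
    have h2 : (g * (MulAction.mem_orbit_iff.mp ha).choose) • x = b := by
      rw [mul_smul, h1]; exact hab.symm
    have := orbit_key x y hstab b hb _ h2
    rw [this, mul_smul]

universe u v

lemma marks_eq_iso {G : Type*} [Group G] [Finite G] :
    ∀ (n : ℕ) (α : Type u) (β : Type v) [Finite α] [Finite β] [MulAction G α] [MulAction G β],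
      Nat.card α = n → (∀ H : Subgroup G, mark H α = mark H β) →
      ∃ e : α ≃ β, ∀ (g : G) (x : α), e (g • x) = g • e x := by
  intro n
  induction n using Nat.strong_induction_on with
  | _ n ih =>
  intro α β _ _ _ _ hcard hmarks
  classical
  rcases Nat.eq_zero_or_pos n with hn | hn
  · subst hn
    have hα : IsEmpty α := by
      rcases Nat.card_eq_zero.mp hcard with h | h
      · exact h
      · exact absurd h (not_infinite_iff_finite.mpr ‹_›)
    have hβcard : Nat.card β = 0 := by
      have := hmarks ⊥
      rw [mark_bot, mark_bot, hcard] at this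
      exact this.symm
    have hβ : IsEmpty β := by
      rcases Nat.card_eq_zero.mp hβcard with h | h
      · exact h
      · exact absurd h (not_infinite_iff_finite.mpr ‹_›)
    exact ⟨Equiv.equivOfIsEmpty α β, fun g x => isEmptyElim x⟩
  · -- nonempty case
    have hne : Nonempty α := (Nat.card_pos_iff.mp (hcard ▸ hn)).1
    obtain ⟨x0⟩ := hne
    set S : Set (Subgroup G) := {K : Subgroup G | mark K α ≠ 0} with hS
    have hSne : (MulAction.stabilizer G x0) ∈ S := by
      rw [hS, Set.mem_setOf_eq, mark_ne_zero_iff]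
      exact ⟨x0, fun h hh => hh⟩
    obtain ⟨H, hHS, hmaxc⟩ := Set.Finite.exists_maximalFor
      (fun K : Subgroup G => Nat.card K) S (Set.toFinite S) ⟨_, hSne⟩
    have hmax : ∀ K ∈ S, H ≤ K → H = K := by
      intro K hK hle
      exact Subgroup.eq_of_le_of_card_ge hle
        (hmaxc hK (Subgroup.card_le_of_le hle))
    -- a point of α with stabilizer exactly H
    obtain ⟨x, hx⟩ := (mark_ne_zero_iff H).mp hHS
    have hstabx : MulAction.stabilizer G x = H := by
      refine (hmax (MulAction.stabilizer G x) ?_ (fun h hh => hx h hh)).symm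
      rw [hS, Set.mem_setOf_eq, mark_ne_zero_iff]
      exact ⟨x, fun h hh => hh⟩
    -- a point of β with stabilizer exactly H
    obtain ⟨y, hy⟩ := (mark_ne_zero_iff H).mp (by rw [← hmarks H]; exact hHS)
    have hstaby : MulAction.stabilizer G y = H := by
      refine (hmax (MulAction.stabilizer G y) ?_ (fun h hh => hy h hh)).symm
      rw [hS, Set.mem_setOf_eq, hmarks, mark_ne_zero_iff]
      exact ⟨y, fun h hh => hh⟩
    have hstab : MulAction.stabilizer G x = MulAction.stabilizer G y := by
      rw [hstabx, hstaby]
    -- invariant predicates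
    set p : α → Prop := fun a => a ∈ MulAction.orbit G x with hpdef
    set q : β → Prop := fun b => b ∈ MulAction.orbit G y with hqdef
    obtain ⟨eOrb, hOrb⟩ := orbit_equiv x y hstab
    have hp : ∀ (g : G) (a : α), p a → p (g • a) := by
      intro g a ha
      obtain ⟨k, hk⟩ := MulAction.mem_orbit_iff.mp ha
      exact MulAction.mem_orbit_iff.mpr ⟨g * k, by rw [mul_smul, hk]⟩
    have hq : ∀ (g : G) (b : β), q b → q (g • b) := by
      intro g b hb
      obtain ⟨k, hk⟩ := MulAction.mem_orbit_iff.mp hb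
      exact MulAction.mem_orbit_iff.mpr ⟨g * k, by rw [mul_smul, hk]⟩
    have hp' : ∀ (g : G) (a : α), ¬ p a → ¬ p (g • a) := by
      intro g a ha hga
      exact ha (by simpa using hp g⁻¹ _ hga)
    have hq' : ∀ (g : G) (b : β), ¬ q b → ¬ q (g • b) := by
      intro g b hb hgb
      exact hb (by simpa using hq g⁻¹ _ hgb)
    letI iA : MulAction G {a : α // p a} := invSubAction p hp
    letI iA' : MulAction G {a : α // ¬ p a} := invSubAction _ hp'
    letI iB : MulAction G {b : β // q b} := invSubAction q hq
    letI iB' : MulAction G {b : β // ¬ q b} := invSubAction _ hq'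
    -- decomposition equivalences
    let eA : {a : α // p a} ⊕ {a : α // ¬ p a} ≃ α := Equiv.sumCompl p
    let eB : {b : β // q b} ⊕ {b : β // ¬ q b} ≃ β := Equiv.sumCompl q
    have hEA : ∀ (g : G) (s : {a : α // p a} ⊕ {a : α // ¬ p a}), eA (g • s) = g • eA s := by
      intro g s; cases s <;> rfl
    have hEB : ∀ (g : G) (s : {b : β // q b} ⊕ {b : β // ¬ q b}), eB (g • s) = g • eB s := by
      intro g s; cases s <;> rfl
    -- eOrb is equivariant for the subtype actions
    have hOrb' : ∀ (g : G) (t : {a : α // p a}), eOrb (g • t) = g • eOrb t := by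
      intro g t
      apply Subtype.ext
      show (eOrb (g • t)).1 = g • (eOrb t).1
      exact hOrb g t (g • t) rfl
    -- mark decomposition
    have hmA : ∀ K : Subgroup G, mark K α = mark K {a : α // p a} + mark K {a : α // ¬ p a} := by
      intro K; rw [← mark_sum]; exact (mark_congr eA hEA K).symm
    have hmB : ∀ K : Subgroup G, mark K β = mark K {b : β // q b} + mark K {b : β // ¬ q b} := by
      intro K; rw [← mark_sum]; exact (mark_congr eB hEB K).symm
    have horb : ∀ K : Subgroup G, mark K {a : α // p a} = mark K {b : β // q b} :=
      fun K => mark_congr eOrb hOrb' K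
    have hmarks' : ∀ K : Subgroup G, mark K {a : α // ¬ p a} = mark K {b : β // ¬ q b} := by
      intro K
      have h := hmarks K
      rw [hmA K, hmB K, horb K] at h
      exact Nat.add_left_cancel h
    -- cardinality drop
    have hcardsplit : Nat.card {a : α // p a} + Nat.card {a : α // ¬ p a} = n := by
      rw [← Nat.card_sum, ← hcard]
      exact Nat.card_congr eA
    have horbpos : 0 < Nat.card {a : α // p a} :=
      Nat.card_pos_iff.mpr ⟨⟨⟨x, MulAction.mem_orbit_self x⟩⟩, inferInstance⟩
    have hlt : Nat.card {a : α // ¬ p a} < n := by omega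
    obtain ⟨e', he'⟩ := ih _ hlt {a : α // ¬ p a} {b : β // ¬ q b} rfl hmarks'
    -- assemble
    refine ⟨(eA.symm.trans ((Equiv.sumCongr eOrb e').trans eB)), fun g a => ?_⟩
    have h1 : eA.symm (g • a) = g • eA.symm a := equiv_symm_smul eA hEA g a
    have h2 : ∀ s, (Equiv.sumCongr eOrb e') (g • s) = g • (Equiv.sumCongr eOrb e') s := by
      intro s
      cases s with
      | inl t => exact congrArg Sum.inl (hOrb' g t)
      | inr t => exact congrArg Sum.inr (he' g t)
    simp only [Equiv.trans_apply, h1, h2, hEB]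

end Aux

/-- the family of marks `φ_H : A(G) → ℤ` assembles into an injective ring
homomorphism on the Burnside ring: marks are additive under disjoint union, multiplicative
under cartesian product, and two finite `G`-sets with the same marks at all subgroups are
`G`-equivariantly isomorphic. -/
theorem marks_injective_ring_hom {G : Type*} [Group G] [Finite G]
    (α β : Type*) [Finite α] [Finite β] [MulAction G α] [MulAction G β] :
    (∀ H : Subgroup G, mark H (α ⊕ β) = mark H α + mark H β) ∧
    (∀ H : Subgroup G, mark H (α × β) = mark H α * mark H β) ∧
    ((∀ H : Subgroup G, mark H α = mark H β) →
      ∃ e : α ≃ β, ∀ (g : G) (x : α), e (g • x) = g • e x) := by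
  exact ⟨mark_sum, mark_prod, fun h => marks_eq_iso (Nat.card α) α β rfl h⟩
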